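/- arXiv:0905.2745 — 5 statements merged into one kernel-verified Lean document; each statement's English description precedes it below -/
import Mathlib

section
/- Suppose p ∈ L is divisible by u (every monomial of p has u-exponent at least 1). Let p̂ be obtained from p by deleting every monomial uʳzˢ that does not satisfy both 1 ≤ r ≤ ⌊(2j−2)/k⌋ and kr−j+1 ≤ s ≤ j−1. Then there exist a polynomial a ∈ ℂ[z,u] and a V-holomorphic element b ∈ L such that p − p̂ = zʲ·a + z⁻ʲ·b. (This is the statement that every u-divisible extension class on Z_k has the canonical polynomial normal form p̂, since adding zʲ·(U-holomorphic) + z⁻ʲ·(V-holomorphic) terms does not change the extension.) -/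
noncomputable section

/-- `L = ℂ[z,z⁻¹][u]`: Laurent polynomials in `z` with polynomial coefficients in `u`,
realised as the algebra of finitely supported ℂ-linear combinations of monomials on the
exponent monoid `ℤ × ℕ`, where `(s, r)` is the exponent of the monomial `zˢuʳ`. -/
abbrev L : Type := AddMonoidAlgebra ℂ (ℤ × ℕ)

/-- The monomial `zˢ` (`s ∈ ℤ`). -/
def zp (s : ℤ) : L := AddMonoidAlgebra.single (s, 0) 1

/-- The monomial `u`. -/
def uu : L := AddMonoidAlgebra.single (0, 1) 1

/-- `f` is V-holomorphic: every monomial `zˢuʳ` occurring in `f` satisfies `s ≤ k·r`,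
i.e. `f` is holomorphic in the coordinates `(z⁻¹, zᵏu)` of the chart `V` of `Z_k`. -/
def VHol (k : ℕ) (f : L) : Prop := ∀ (s : ℤ) (r : ℕ), f.coeff (s, r) ≠ 0 → s ≤ (k : ℤ) * r

/-- `f` lies in `ℂ[z,u] ⊆ L`, i.e. is holomorphic on the chart `U`. -/
def MemPolyRing (f : L) : Prop := ∀ (s : ℤ) (r : ℕ), f.coeff (s, r) ≠ 0 → 0 ≤ s

/-- Shift of exponents: injective addition on `ℤ × ℕ` with second component zero. -/
lemma shift_inj (c : ℤ) : Function.Injective (fun x : ℤ × ℕ => x + ((c, 0) : ℤ × ℕ)) := by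
  intro x y h
  simpa [Prod.ext_iff] using h

lemma single_shift_mul (c : ℤ) (f : L) (s : ℤ) (r : ℕ) :
    (AddMonoidAlgebra.single ((c, 0) : ℤ × ℕ) (1 : ℂ) * f).coeff (s, r) = f.coeff (s - c, r) := by
  rw [AddMonoidAlgebra.coeff_single_mul_eq_mul_coeff (x := f) (r := 1) (m := ((c, 0) : ℤ × ℕ)) (m₁ := (s, r)) (s - c, r), one_mul]
  intro a _
  constructor
  · rintro h
    have h1 : c + a.1 = s := congrArg Prod.fst h
    have h2 : a.2 = r := by simpa using congrArg Prod.snd h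
    exact Prod.ext (by omega) h2
  · rintro rfl
    exact Prod.ext (by simp) (by simp)

/-- If `p ∈ L` is divisible by `u`, and `p̂` is obtained from `p` by deleting
every monomial `uʳzˢ` not satisfying `1 ≤ r ≤ ⌊(2j−2)/k⌋` and `kr−j+1 ≤ s ≤ j−1`, then
`p − p̂ = zʲ·a + z⁻ʲ·b` for some polynomial `a ∈ ℂ[z,u]` and some V-holomorphic `b ∈ L`. -/
theorem canonical_normal_form (k : ℕ) (hk : 1 ≤ k) (j : ℕ) (p phat : L)
    (hu : ∀ (s : ℤ) (r : ℕ), p.coeff (s, r) ≠ 0 → 1 ≤ r)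
    (hphat : ∀ (s : ℤ) (r : ℕ),
      phat.coeff (s, r) =
        if 1 ≤ r ∧ (r : ℤ) ≤ (2 * (j : ℤ) - 2) / (k : ℤ) ∧
            (k : ℤ) * r - (j : ℤ) + 1 ≤ s ∧ s ≤ (j : ℤ) - 1
        then p.coeff (s, r) else 0) :
    ∃ a b : L, MemPolyRing a ∧ VHol k b ∧ p - phat = zp j * a + zp (-(j : ℤ)) * b := by
  classical
  set q : L := p - phat with hq
  -- basic facts about nonzero coefficients of q
  have key : ∀ (s : ℤ) (r : ℕ), q.coeff (s, r) ≠ 0 →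
      1 ≤ r ∧ ¬(1 ≤ r ∧ (r : ℤ) ≤ (2 * (j : ℤ) - 2) / (k : ℤ) ∧
        (k : ℤ) * r - (j : ℤ) + 1 ≤ s ∧ s ≤ (j : ℤ) - 1) := by
    intro s r hqs
    have hqv : q.coeff (s, r) = p.coeff (s, r) - phat.coeff (s, r) := rfl
    by_cases hc : 1 ≤ r ∧ (r : ℤ) ≤ (2 * (j : ℤ) - 2) / (k : ℤ) ∧
        (k : ℤ) * r - (j : ℤ) + 1 ≤ s ∧ s ≤ (j : ℤ) - 1
    · exfalso; apply hqs; rw [hqv, hphat, if_pos hc, sub_self]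
    · have hp : p.coeff (s, r) ≠ 0 := by
        intro h0
        apply hqs
        rw [hqv, hphat, if_neg hc, h0, sub_zero]
      exact ⟨hu s r hp, hc⟩
  -- the two halves of q
  set q1 : L := AddMonoidAlgebra.ofCoeff (q.coeff.filter (fun x => (j : ℤ) ≤ x.1)) with hq1
  set q2 : L := AddMonoidAlgebra.ofCoeff (q.coeff.filter (fun x => ¬ (j : ℤ) ≤ x.1)) with hq2
  set a : L := AddMonoidAlgebra.ofCoeff (Finsupp.comapDomain (fun x : ℤ × ℕ => x + (((j : ℤ), 0) : ℤ × ℕ)) q1.coeff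
    ((shift_inj (j : ℤ)).injOn)) with ha
  set b : L := AddMonoidAlgebra.ofCoeff (Finsupp.comapDomain (fun x : ℤ × ℕ => x + ((-(j : ℤ), 0) : ℤ × ℕ)) q2.coeff
    ((shift_inj (-(j : ℤ))).injOn)) with hb
  have haval : ∀ (s : ℤ) (r : ℕ), a.coeff (s, r) = q1.coeff (s + j, r) := fun s r => rfl
  have hbval : ∀ (s : ℤ) (r : ℕ), b.coeff (s, r) = q2.coeff (s - j, r) := by
    intro s r
    have he : ((s, r) + ((-(j : ℤ), 0) : ℤ × ℕ)) = ((s - (j : ℤ), r) : ℤ × ℕ) := by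
      simp [Prod.ext_iff, sub_eq_add_neg]
    show q2.coeff ((s, r) + ((-(j : ℤ), 0) : ℤ × ℕ)) = q2.coeff (s - j, r)
    rw [he]
  refine ⟨a, b, ?_, ?_, ?_⟩
  · intro s r h
    rw [haval, hq1, AddMonoidAlgebra.coeff_ofCoeff, Finsupp.filter_apply] at h
    have hcond : (j : ℤ) ≤ s + j := by
      by_contra hc
      simp [hc] at h
    omega
  · intro s r h
    rw [hbval, hq2, AddMonoidAlgebra.coeff_ofCoeff, Finsupp.filter_apply] at h
    have hs : ¬ (j : ℤ) ≤ s - j := by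
      by_contra hc
      simp [hc] at h
    rw [if_pos hs] at h
    have hqne : q.coeff (s - j, r) ≠ 0 := h
    obtain ⟨hr1, hnc⟩ := key _ _ hqne
    push_neg at hnc
    have hcase := hnc hr1
    -- either r too big, or s - j ≤ k r - j, or j ≤ s - j (excluded)
    by_cases h2 : (r : ℤ) ≤ (2 * (j : ℤ) - 2) / (k : ℤ)
    · have h3 := hcase h2
      rcases le_or_gt ((k : ℤ) * r - (j : ℤ) + 1) (s - (j : ℤ)) with hC | hC
      · have := h3 hC
        omega
      · omega
    · -- r > (2j-2)/k, so k r ≥ 2j - 1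
      push_neg at h2
      have hkpos : (0 : ℤ) < (k : ℤ) := by exact_mod_cast hk
      have : 2 * (j : ℤ) - 2 < r * k := by
        rw [← Int.ediv_lt_iff_lt_mul hkpos]
        exact h2
      have hkr : 2 * (j : ℤ) - 1 ≤ (k : ℤ) * r := by
        have := this
        nlinarith [this]
      omega
  · apply AddMonoidAlgebra.ext
    apply Finsupp.ext
    rintro ⟨s, r⟩
    have h1 : (zp (j : ℤ) * a).coeff (s, r) = q1.coeff (s, r) := by
      rw [zp, single_shift_mul, haval]
      congr 2
      omega
    have h2 : (zp (-(j : ℤ)) * b).coeff (s, r) = q2.coeff (s, r) := by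
      rw [zp, single_shift_mul, hbval]
      congr 2
      omega
    rw [AddMonoidAlgebra.coeff_add, Finsupp.add_apply, h1, h2, hq1, hq2, AddMonoidAlgebra.coeff_ofCoeff, AddMonoidAlgebra.coeff_ofCoeff, Finsupp.filter_apply, Finsupp.filter_apply]
    by_cases hc : (j : ℤ) ≤ s <;> simp [hc, hq]
end
end

section
/- Let p ∈ L be nonzero, and let min_u(p) be the minimal u-exponent among the monomials of p. Let a = Σ_{r,s≥0} a_{rs} uʳzˢ and b = Σ_{r,s≥0} b_{rs} uʳzˢ be formal power series in ℂ[[z,u]], and suppose that the formal series zʲ·a + p·b is V-holomorphic (every monomial zˢuʳ occurring in it satisfies s ≤ k·r). Then for every r < min_u(p) and every s, a_{rs} ≠ 0 implies 0 ≤ s ≤ kr − j; in particular, if kr − j < 0 then the u-degree-r part of a vanishes. -/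
noncomputable section

/-- Formal series in the monomials `zˢuʳ` (`s ∈ ℤ`, `r ∈ ℕ`), as coefficient functions. -/
abbrev FS : Type := ℤ × ℕ → ℂ

/-- The product of a Laurent polynomial `p ∈ L` with a formal series: for each monomial only
finitely many terms of `p` contribute, so the product is a well-defined formal series. -/
def mulL (p : L) (f : FS) : FS := fun m =>
  ∑ e ∈ Finsupp.support p.coeff, if e.2 ≤ m.2 then p.coeff e * f (m.1 - e.1, m.2 - e.2) else 0

/-- Multiplication of a formal series by `zᵗ` (`t ∈ ℤ`). -/
def shiftz (t : ℤ) (f : FS) : FS := fun m => f (m.1 - t, m.2)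

/-- A formal series is V-holomorphic if every occurring monomial `zˢuʳ` satisfies `s ≤ k·r`. -/
def VHolF (k : ℕ) (f : FS) : Prop := ∀ (s : ℤ) (r : ℕ), f (s, r) ≠ 0 → s ≤ (k : ℤ) * r

/-- A formal series lies in `ℂ[[z,u]]`: no negative powers of `z` occur. -/
def MemPS (f : FS) : Prop := ∀ (s : ℤ) (r : ℕ), s < 0 → f (s, r) = 0

/-- Let `p ∈ L` be nonzero with minimal u-exponent `mu`. If `a, b ∈ ℂ[[z,u]]`
and `zʲ·a + p·b` is V-holomorphic, then for `r < mu`, `a_{rs} ≠ 0` implies `0 ≤ s ≤ kr − j`. -/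
theorem a_support_bound_below_min_u (k : ℕ) (hk : 1 ≤ k) (j : ℕ) (p : L) (hp : p ≠ 0)
    (mu : ℕ)
    (hmu_mem : ∃ s : ℤ, p.coeff (s, mu) ≠ 0)
    (hmu_min : ∀ (s : ℤ) (r : ℕ), p.coeff (s, r) ≠ 0 → mu ≤ r)
    (a b : FS) (ha : MemPS a) (hb : MemPS b)
    (hV : VHolF k (shiftz (j : ℤ) a + mulL p b)) :
    ∀ (r : ℕ) (s : ℤ), r < mu → a (s, r) ≠ 0 → 0 ≤ s ∧ s ≤ (k : ℤ) * r - j := by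
  intro r s hr hA
  have h0 : 0 ≤ s := by
    by_contra h
    exact hA (ha s r (lt_of_not_ge h))
  refine ⟨h0, ?_⟩
  have hmul : mulL p b (s + j, r) = 0 := by
    unfold mulL
    apply Finset.sum_eq_zero
    intro e he
    have hpe : p.coeff e ≠ 0 := Finsupp.mem_support_iff.mp he
    have : mu ≤ e.2 := hmu_min e.1 e.2 (by cases e; exact hpe)
    rw [if_neg (by omega)]
  have hsum : (shiftz (j : ℤ) a + mulL p b) (s + j, r) = a (s, r) := by
    simp [shiftz, hmul]
  have := hV (s + j) r (by rw [hsum]; exact hA)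
  omega
end
end

section
/- Let p ∈ L be nonzero, with min_u(p) its minimal u-exponent and max_z(p) its maximal z-exponent. Let a = Σ_{r,s≥0} a_{rs} uʳzˢ and b = Σ_{r,s≥0} b_{rs} uʳzˢ be formal power series in ℂ[[z,u]] such that z⁻ʲ·b is V-holomorphic and the formal series zʲ·a + p·b is V-holomorphic. Then for every r ≥ min_u(p) and every s, a_{rs} ≠ 0 implies 0 ≤ s ≤ max{ k(r − min_u(p)) + j + max{max_z(p), 0}, kr − j }. -/
noncomputable section

/-- Let `p ∈ L` be nonzero with minimal u-exponent `mu` and maximal z-exponent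
`Mz`. If `a, b ∈ ℂ[[z,u]]` are such that `z⁻ʲ·b` and `zʲ·a + p·b` are V-holomorphic, then for
`r ≥ mu`, `a_{rs} ≠ 0` implies `0 ≤ s ≤ max { k(r − mu) + j + max{Mz, 0}, kr − j }`. -/
theorem a_support_bound_above_min_u (k : ℕ) (hk : 1 ≤ k) (j : ℕ) (p : L) (hp : p ≠ 0)
    (mu : ℕ) (Mz : ℤ)
    (hmu_mem : ∃ s : ℤ, p.coeff (s, mu) ≠ 0)
    (hmu_min : ∀ (s : ℤ) (r : ℕ), p.coeff (s, r) ≠ 0 → mu ≤ r)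
    (hMz_mem : ∃ r : ℕ, p.coeff (Mz, r) ≠ 0)
    (hMz_max : ∀ (s : ℤ) (r : ℕ), p.coeff (s, r) ≠ 0 → s ≤ Mz)
    (a b : FS) (ha : MemPS a) (hb : MemPS b)
    (hVb : VHolF k (shiftz (-(j : ℤ)) b))
    (hV : VHolF k (shiftz (j : ℤ) a + mulL p b)) :
    ∀ (r : ℕ) (s : ℤ), mu ≤ r → a (s, r) ≠ 0 →
      0 ≤ s ∧ s ≤ max ((k : ℤ) * ((r : ℤ) - mu) + j + max Mz 0) ((k : ℤ) * r - j) := by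
  intro r s hr hne
  have h0 : 0 ≤ s := le_of_not_gt (fun h => hne (ha s r h))
  refine ⟨h0, ?_⟩
  by_cases hg : (shiftz (j : ℤ) a + mulL p b) (s + j, r) = 0
  · -- the coefficient cancels against p·b
    have hsa : (shiftz (j : ℤ) a) (s + j, r) = a (s, r) := by
      simp [shiftz]
    have hmb : mulL p b (s + j, r) ≠ 0 := by
      intro h
      apply hne
      have := hg
      simp only [Pi.add_apply, hsa, h, add_zero] at this
      exact this
    obtain ⟨e, he, hterm⟩ := Finset.exists_ne_zero_of_sum_ne_zero hmb
    have he2 : e.2 ≤ r := by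
      by_contra h
      simp [h] at hterm
    rw [if_pos he2] at hterm
    have hpe : p.coeff e ≠ 0 := fun h => hterm (by simp [h])
    have hbe : b (s + (j : ℤ) - e.1, r - e.2) ≠ 0 := fun h => hterm (by simp [h])
    have hpe' : p.coeff (e.1, e.2) ≠ 0 := by rwa [Prod.mk.eta]
    have hmu : mu ≤ e.2 := hmu_min e.1 e.2 hpe'
    have hMz : e.1 ≤ Mz := hMz_max e.1 e.2 hpe'
    have hvb : s - e.1 ≤ (k : ℤ) * ((r : ℤ) - e.2) := by
      have : (shiftz (-(j : ℤ)) b) (s - e.1, r - e.2) ≠ 0 := by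
        simpa [shiftz, sub_neg_eq_add, add_sub_right_comm] using hbe
      have h2 := hVb (s - e.1) (r - e.2) this
      rwa [Nat.cast_sub he2] at h2
    have hmono : (k : ℤ) * ((r : ℤ) - e.2) ≤ (k : ℤ) * ((r : ℤ) - mu) := by
      apply mul_le_mul_of_nonneg_left _ (by positivity)
      omega
    have : s ≤ (k : ℤ) * ((r : ℤ) - mu) + j + max Mz 0 := by
      have := le_max_left Mz 0
      omega
    exact le_trans this (le_max_left _ _)
  · have := hV (s + j) r hg
    have : s ≤ (k : ℤ) * r - j := by omega
    exact le_trans this (le_max_right _ _)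
end
end

section
/- Let p ∈ L. For every pair (f,g) ∈ L × L there exist: a pair (a_U, b_U) ∈ ℂ[z,u] × ℂ[z,u]; a pair (f_V, g_V) ∈ L × L such that zʲ·f_V + p·g_V and z⁻ʲ·g_V are both V-holomorphic; and an element c ∈ L supported on monomials uʳzˢ with 0 ≤ r ≤ ⌊(j−2)/k⌋ and kr−j+1 ≤ s ≤ −1, such that (f,g) = (a_U, b_U) + (f_V, g_V) + (c, 0). (This is the statement that every Čech 1-cocycle of E with respect to the cover {U,V} of Z_k admits a canonical representative of the form (Σ a_{rs} zˢuʳ, 0) with indices in the stated range.) -/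
noncomputable section

lemma zp_mul_apply (a : ℤ) (f : L) (s : ℤ) (r : ℕ) :
    (zp a * f).coeff (s, r) = f.coeff (s - a, r) := by
  rw [zp, AddMonoidAlgebra.coeff_single_mul_eq_mul_coeff (s - a, r) ?_, one_mul]
  rintro ⟨b1, b2⟩ -
  simp [Prod.ext_iff]
  omega

lemma zp_mul_zp (a b : ℤ) : zp a * zp b = zp (a + b) := by
  simp [zp, AddMonoidAlgebra.single_mul_single]

/-- Every Čech 1-cocycle `(f,g) ∈ L²` of the bundle `E` determined by `(j,p)`
on `Z_k`, with respect to the cover `{U, V}`, splits as a sum of a section over `U` (a pair of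
polynomials), a section over `V` (a pair whose `T`-transform is V-holomorphic), and a canonical
representative `(c, 0)` with `c` supported on monomials `uʳzˢ` with `0 ≤ r ≤ ⌊(j−2)/k⌋` and
`kr−j+1 ≤ s ≤ −1`. -/
theorem cocycle_canonical_representative (k : ℕ) (hk : 1 ≤ k) (j : ℕ) (p : L) :
    ∀ f g : L,
      ∃ aU bU fV gV c : L,
        MemPolyRing aU ∧ MemPolyRing bU ∧
        VHol k (zp (j : ℤ) * fV + p * gV) ∧ VHol k (zp (-(j : ℤ)) * gV) ∧
        (∀ (s : ℤ) (r : ℕ), c.coeff (s, r) ≠ 0 →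
          (r : ℤ) ≤ ((j : ℤ) - 2) / k ∧ (k : ℤ) * r - j + 1 ≤ s ∧ s ≤ -1) ∧
        f = aU + fV + c ∧ g = bU + gV := by
  classical
  intro f g
  set gV : L := AddMonoidAlgebra.ofCoeff (Finsupp.filter (fun x : ℤ × ℕ => x.1 < 0) g.coeff) with hgVdef
  set bU : L := AddMonoidAlgebra.ofCoeff (Finsupp.filter (fun x : ℤ × ℕ => 0 ≤ x.1) g.coeff) with hbUdef
  set F : L := f + zp (-(j : ℤ)) * (p * gV) with hFdef
  set aU : L := AddMonoidAlgebra.ofCoeff (Finsupp.filter (fun x : ℤ × ℕ => 0 ≤ x.1) F.coeff) with haUdef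
  set h : L := AddMonoidAlgebra.ofCoeff (Finsupp.filter (fun x : ℤ × ℕ => x.1 < 0 ∧ x.1 + j ≤ (k : ℤ) * x.2) F.coeff) with hhdef
  set c : L := AddMonoidAlgebra.ofCoeff (Finsupp.filter (fun x : ℤ × ℕ => x.1 < 0 ∧ ¬ (x.1 + j ≤ (k : ℤ) * x.2)) F.coeff) with hcdef
  refine ⟨aU, bU, h - zp (-(j : ℤ)) * (p * gV), gV, c, ?_, ?_, ?_, ?_, ?_, ?_, ?_⟩
  · intro s r hne
    rw [haUdef, AddMonoidAlgebra.coeff_ofCoeff, Finsupp.filter_apply] at hne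
    by_contra hs
    simp [hs] at hne
  · intro s r hne
    rw [hbUdef, AddMonoidAlgebra.coeff_ofCoeff, Finsupp.filter_apply] at hne
    by_contra hs
    simp [hs] at hne
  · have key : zp (j : ℤ) * (h - zp (-(j : ℤ)) * (p * gV)) + p * gV = zp (j : ℤ) * h := by
      have : zp (j : ℤ) * zp (-(j : ℤ)) = 1 := by
        rw [zp_mul_zp]; simp [zp]; rfl
      rw [mul_sub, ← mul_assoc, this, one_mul]; ring
    rw [key]
    intro s r hne
    rw [zp_mul_apply] at hne
    rw [hhdef, AddMonoidAlgebra.coeff_ofCoeff, Finsupp.filter_apply] at hne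
    split_ifs at hne with hp
    · dsimp only at hp; omega
    · exact absurd rfl hne
  · intro s r hne
    rw [zp_mul_apply] at hne
    rw [hgVdef, AddMonoidAlgebra.coeff_ofCoeff, Finsupp.filter_apply] at hne
    split_ifs at hne with hp
    · have : (0:ℤ) ≤ (k : ℤ) * r := by positivity
      dsimp only at hp
      omega
    · exact absurd rfl hne
  · intro s r hne
    rw [hcdef, AddMonoidAlgebra.coeff_ofCoeff, Finsupp.filter_apply] at hne
    split_ifs at hne with hp
    swap
    · exact absurd rfl hne
    · dsimp only at hp
      obtain ⟨h1, h2⟩ := hp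
      have hkr : (k : ℤ) * r ≤ (j : ℤ) - 2 := by omega
      refine ⟨?_, by omega, by omega⟩
      rw [Int.le_ediv_iff_mul_le (by exact_mod_cast hk)]
      calc (r : ℤ) * k = (k : ℤ) * r := by ring
        _ ≤ (j : ℤ) - 2 := hkr
  · have hpart : aU + h + c = F := by
      ext x
      obtain ⟨s, r⟩ := x
      rw [haUdef, hhdef, hcdef, AddMonoidAlgebra.coeff_add, AddMonoidAlgebra.coeff_add,
        AddMonoidAlgebra.coeff_ofCoeff, AddMonoidAlgebra.coeff_ofCoeff, AddMonoidAlgebra.coeff_ofCoeff,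
        Finsupp.add_apply, Finsupp.add_apply,
        Finsupp.filter_apply, Finsupp.filter_apply, Finsupp.filter_apply]
      split_ifs <;> (try dsimp only at *) <;> first
        | (exfalso; omega)
        | simp
    have : aU + (h - zp (-(j : ℤ)) * (p * gV)) + c = F - zp (-(j : ℤ)) * (p * gV) := by
      rw [← hpart]; ring
    rw [this, hFdef]; ring
  · rw [hbUdef, hgVdef]
    ext x
    obtain ⟨s, r⟩ := x
    rw [AddMonoidAlgebra.coeff_add, AddMonoidAlgebra.coeff_ofCoeff, AddMonoidAlgebra.coeff_ofCoeff,
      Finsupp.add_apply, Finsupp.filter_apply, Finsupp.filter_apply]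
    split_ifs <;> (try dsimp only at *) <;> first
      | (exfalso; omega)
      | simp
end
end

section
/- Let p ∈ L be divisible by u and such that z⁻ʲ·p is V-holomorphic (as holds for p in canonical normal form). Let a, b, c, d ∈ ℂ[[z,u]] be formal power series such that each of the four series a + zʲp·b + z⁻ʲp·c + p²·d, z²ʲ·b + zʲp·d, z⁻²ʲ·c + z⁻ʲp·d, and d is V-holomorphic (every occurring monomial zˢuʳ satisfies s ≤ kr). Then every monomial zˢuʳ occurring in d satisfies 0 ≤ s ≤ kr, and every monomial zˢuʳ occurring in c satisfies 0 ≤ s ≤ kr + 2j. (These are the support bounds on the last two components of a global holomorphic section of End E over the formal neighbourhood of the zero section.) -/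
noncomputable section

/-- Let `p ∈ L` be divisible by `u` with `z⁻ʲ·p` V-holomorphic. If formal power
series `a, b, c, d ∈ ℂ[[z,u]]` are such that all four entries of the `End E`-transform
`(a + zʲp·b + z⁻ʲp·c + p²·d, z²ʲ·b + zʲp·d, z⁻²ʲ·c + z⁻ʲp·d, d)` are V-holomorphic, then every
monomial `zˢuʳ` of `d` satisfies `0 ≤ s ≤ kr` and every monomial of `c` satisfies
`0 ≤ s ≤ kr + 2j`. -/
theorem endE_section_support_bounds (k : ℕ) (hk : 1 ≤ k) (j : ℕ) (p : L)
    (hu : ∀ (s : ℤ) (r : ℕ), p.coeff (s, r) ≠ 0 → 1 ≤ r)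
    (hpV : VHol k (zp (-(j : ℤ)) * p))
    (a b c d : FS) (ha : MemPS a) (hb : MemPS b) (hc : MemPS c) (hd : MemPS d)
    (h1 : VHolF k (a + mulL (zp (j : ℤ) * p) b + mulL (zp (-(j : ℤ)) * p) c + mulL (p * p) d))
    (h2 : VHolF k (shiftz (2 * (j : ℤ)) b + mulL (zp (j : ℤ) * p) d))
    (h3 : VHolF k (shiftz (-(2 * (j : ℤ))) c + mulL (zp (-(j : ℤ)) * p) d))
    (h4 : VHolF k d) :
    (∀ (s : ℤ) (r : ℕ), d (s, r) ≠ 0 → 0 ≤ s ∧ s ≤ (k : ℤ) * r) ∧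
    (∀ (s : ℤ) (r : ℕ), c (s, r) ≠ 0 → 0 ≤ s ∧ s ≤ (k : ℤ) * r + 2 * j) := by
  -- the product of a V-holomorphic Laurent polynomial with a V-holomorphic series is V-hol
  have key : ∀ (q : L), VHol k q → VHolF k (mulL q d) := by
    intro q hq s r h
    rw [mulL] at h
    obtain ⟨e, he, hne⟩ := Finset.exists_ne_zero_of_sum_ne_zero h
    by_cases h2le : e.2 ≤ r
    · simp only [h2le, if_true] at hne
      have hqe : q.coeff e ≠ 0 := fun h0 => hne (by simp [h0])
      have hde : d (s - e.1, r - e.2) ≠ 0 := fun h0 => hne (by simp [h0])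
      have b1 : e.1 ≤ (k : ℤ) * e.2 := by
        have := hq e.1 e.2; rw [Prod.mk.eta] at this; exact this hqe
      have b2 : s - e.1 ≤ (k : ℤ) * ((r - e.2 : ℕ) : ℤ) := h4 _ _ hde
      rw [Nat.cast_sub h2le] at b2
      have : (k : ℤ) * r = k * e.2 + k * ((r : ℤ) - e.2) := by ring
      linarith
    · simp [h2le] at hne
  constructor
  · intro s r h
    refine ⟨?_, h4 s r h⟩
    by_contra hneg
    exact h (hd s r (by omega))
  · intro s r h
    have h0 : 0 ≤ s := by
      by_contra hneg
      exact h (hc s r (by omega))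
    refine ⟨h0, ?_⟩
    have hcoef : shiftz (-(2 * (j : ℤ))) c (s - 2 * j, r) = c (s, r) := by
      simp [shiftz]
    by_cases hm : mulL (zp (-(j : ℤ)) * p) d (s - 2 * j, r) = 0
    · have hsum : (shiftz (-(2 * (j : ℤ))) c + mulL (zp (-(j : ℤ)) * p) d) (s - 2 * j, r) ≠ 0 := by
        simp only [Pi.add_apply, hm, add_zero, hcoef]
        exact h
      have := h3 _ _ hsum
      linarith
    · have := key _ hpV (s - 2 * j) r hm
      linarith
end
end
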